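/- Let a ∈ Aut(T), let O₁,…,O_k be the orbits of the action of a on the first level X, let m_i = |O_i|, and for an arbitrary point x_i ∈ O_i set a_i = (a^{m_i})|_{x_i}. Then a has finite order if and only if every a_i has finite order, and in that case the order of a equals lcm(m₁·|a₁|, m₂·|a₂|, …, m_k·|a_k|). -/

import Mathlib

open List

/-- Vertices of the rooted `d`-ary tree `T`: finite words over the alphabet
`X = Fin d`. -/
abbrev Vertex (d : ℕ) := List (Fin d)

/-- `g` is an automorphism of the rooted `d`-ary tree: a bijection of the
vertex set `X*` preserving word length and the prefix relation. -/
def IsTreeAut {d : ℕ} (g : Equiv.Perm (Vertex d)) : Prop :=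
  (∀ v : Vertex d, (g v).length = v.length) ∧
    ∀ v w : Vertex d, g v <+: g (v ++ w)

theorem IsTreeAut.prefix_mono {d : ℕ} {g : Equiv.Perm (Vertex d)} (hg : IsTreeAut g)
    {u u' : Vertex d} (h : u <+: u') : g u <+: g u' := by
  obtain ⟨t, rfl⟩ := h
  exact hg.2 u t

theorem Equiv.Perm.apply_inv_self {α : Type*} (f : Equiv.Perm α) (x : α) : f (f⁻¹ x) = x :=
  Equiv.apply_symm_apply f x

/-- The automorphism group `Aut(T)` of the rooted `d`-ary tree, as a subgroup
of the group of permutations of the vertex set. -/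
def treeAut (d : ℕ) : Subgroup (Equiv.Perm (Vertex d)) where
  carrier := {g | IsTreeAut g}
  one_mem' := ⟨fun _ => rfl, fun v w => ⟨w, rfl⟩⟩
  mul_mem' := by
    intro g h hg hh
    obtain ⟨hg1, hg2⟩ := hg
    obtain ⟨hh1, hh2⟩ := hh
    refine ⟨fun v => ?_, fun v w => ?_⟩
    · simp [Equiv.Perm.mul_apply, hg1, hh1]
    · obtain ⟨t, ht⟩ := hh2 v w
      simp only [Equiv.Perm.mul_apply]
      rw [← ht]
      exact hg2 (h v) t
  inv_mem' := by
    intro g hgmem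
    obtain ⟨hg1, hg2⟩ := hgmem
    have hg : IsTreeAut g := ⟨hg1, hg2⟩
    have hlen' : ∀ v : Vertex d, (g⁻¹ v).length = v.length := by
      intro v
      conv_rhs => rw [← Equiv.Perm.apply_inv_self g v]
      rw [hg1]
    refine ⟨hlen', fun v w => ?_⟩
    have hle : (g⁻¹ v).length ≤ (g⁻¹ (v ++ w)).length := by
      have h1 := hlen' v
      have h2 := hlen' (v ++ w)
      rw [List.length_append] at h2
      omega
    have htp : (g⁻¹ (v ++ w)).take (g⁻¹ v).length <+: g⁻¹ (v ++ w) :=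
      List.take_prefix _ _
    have hgtp : g ((g⁻¹ (v ++ w)).take (g⁻¹ v).length) <+: v ++ w := by
      have := hg.prefix_mono htp
      rwa [Equiv.Perm.apply_inv_self] at this
    have hlen_tp : (g ((g⁻¹ (v ++ w)).take (g⁻¹ v).length)).length = v.length := by
      rw [hg1, List.length_take, min_eq_left hle, hlen' v]
    have hveq : g ((g⁻¹ (v ++ w)).take (g⁻¹ v).length) = v := by
      have h1 := List.prefix_iff_eq_take.mp hgtp
      have h2 := List.prefix_iff_eq_take.mp (List.prefix_append v w)
      rw [h1, hlen_tp]
      exact h2.symm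
    have hkey : (g⁻¹ (v ++ w)).take (g⁻¹ v).length = g⁻¹ v := by
      apply g.injective
      rw [hveq, Equiv.Perm.apply_inv_self]
    rw [← hkey]
    exact htp

open scoped Classical in
/-- The state (section) `g|_v` of `g` at the vertex `v` : the unique
automorphism satisfying `g (v ++ w) = g v ++ (g|_v) w` for all `w`. -/
noncomputable def state {d : ℕ} (g : Equiv.Perm (Vertex d)) (v : Vertex d) :
    Equiv.Perm (Vertex d) :=
  if h : Function.Bijective (fun w : Vertex d => (g (v ++ w)).drop v.length) then
    Equiv.ofBijective _ h
  else 1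

/-- A finite-state automorphism: one having finitely many states.  The
finite-state automorphisms form the group `F(X)`. -/
def FiniteState {d : ℕ} (g : Equiv.Perm (Vertex d)) : Prop :=
  (Set.range fun v : Vertex d => state g v).Finite

/-- The cardinality of the orbit `Orb_a(v)` of the vertex `v` under the cyclic
group generated by `a`. -/
noncomputable def orbitCard {d : ℕ} (a : Equiv.Perm (Vertex d)) (v : Vertex d) : ℕ :=
  Nat.card (Set.range fun n : ℤ => (a ^ n) v)

/-- The orbit-signalizer `OS(a) = { a^m|_v : v ∈ X^*, m = |Orb_a(v)| }`. -/
noncomputable def OS {d : ℕ} (a : Equiv.Perm (Vertex d)) : Set (Equiv.Perm (Vertex d)) :=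
  {s | ∃ v : Vertex d, s = state (a ^ orbitCard a v) v}

/-- `a` has finite orbit-signalizer. -/
def FiniteOS {d : ℕ} (a : Equiv.Perm (Vertex d)) : Prop := (OS a).Finite

/-- A self-similar (state-closed) subgroup. -/
def SelfSimilar {d : ℕ} (G : Subgroup (Equiv.Perm (Vertex d))) : Prop :=
  ∀ g ∈ G, ∀ v : Vertex d, state g v ∈ G

/-- A contracting group: there is a finite set `N ⊆ G` such that every
`g ∈ G` has all its states in `N` from some level on. -/
def ContractingGroup {d : ℕ} (G : Subgroup (Equiv.Perm (Vertex d))) : Prop :=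
  ∃ N : Set (Equiv.Perm (Vertex d)), N.Finite ∧ N ⊆ (G : Set (Equiv.Perm (Vertex d))) ∧
    ∀ g ∈ G, ∃ n : ℕ, ∀ v : Vertex d, n ≤ v.length → state g v ∈ N

/-- A contracting automorphism: the self-similar group generated by all of its
states is contracting. -/
def ContractingAut {d : ℕ} (f : Equiv.Perm (Vertex d)) : Prop :=
  ContractingGroup (Subgroup.closure (Set.range fun v : Vertex d => state f v))

/-- The activity sequence `θ_k(g)`: the number of vertices `v` of level `k`
whose state `g|_v` acts nontrivially on the first level `X`. -/
noncomputable def theta {d : ℕ} (g : Equiv.Perm (Vertex d)) (k : ℕ) : ℕ :=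
  Nat.card {v : Vertex d // v.length = k ∧ ∃ x : Fin d, state g v [x] ≠ [x]}

/-- A bounded automorphism: a finite-state automorphism with bounded activity
sequence.  The bounded automorphisms form the group `Pol(0)`. -/
def BoundedAut {d : ℕ} (g : Equiv.Perm (Vertex d)) : Prop :=
  FiniteState g ∧ ∃ C : ℕ, ∀ k : ℕ, theta g k ≤ C

/-- A polynomial automorphism (an element of `Pol(∞)`): a finite-state
automorphism whose activity sequence is polynomially bounded. -/
def PolyAut {d : ℕ} (g : Equiv.Perm (Vertex d)) : Prop :=
  FiniteState g ∧ ∃ p : Polynomial ℕ, ∀ k : ℕ, theta g k ≤ p.eval k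

/-- A finitary automorphism (an element of `Pol(-1)`): all states at some
level are trivial. -/
def Finitary {d : ℕ} (g : Equiv.Perm (Vertex d)) : Prop :=
  ∃ k : ℕ, ∀ v : Vertex d, v.length = k → state g v = 1

/-- A functionally recursive automorphism: a member of some finitely generated
self-similar subgroup of `Aut(T)`.  These form the group `FR(X)`. -/
def FunctionallyRecursive {d : ℕ} (g : Equiv.Perm (Vertex d)) : Prop :=
  ∃ G : Subgroup (Equiv.Perm (Vertex d)), G ≤ treeAut d ∧ SelfSimilar G ∧
    (∃ S : Set (Equiv.Perm (Vertex d)), S.Finite ∧ G = Subgroup.closure S) ∧ g ∈ G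
section Aux

variable {d : ℕ}

lemma mem_treeAut {g : Equiv.Perm (Vertex d)} (hg : IsTreeAut g) : g ∈ treeAut d := hg

lemma drop_bijective {g : Equiv.Perm (Vertex d)} (hg : IsTreeAut g) (v : Vertex d) :
    Function.Bijective (fun w : Vertex d => (g (v ++ w)).drop v.length) := by
  have hdec : ∀ w : Vertex d, g (v ++ w) = g v ++ (g (v ++ w)).drop v.length := by
    intro w
    obtain ⟨t, ht⟩ := hg.2 v w
    rw [← ht, List.drop_left' (hg.1 v)]
  constructor
  · intro w1 w2 h
    dsimp only at h
    have h1 := hdec w1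
    have h2 := hdec w2
    rw [h] at h1
    have : g (v ++ w1) = g (v ++ w2) := h1.trans h2.symm
    have := g.injective this
    exact List.append_cancel_left this
  · intro u
    have hinv : IsTreeAut g⁻¹ := (treeAut d).inv_mem (mem_treeAut hg)
    have hpre : g⁻¹ (g v) <+: g⁻¹ (g v ++ u) := hinv.2 (g v) u
    rw [show g⁻¹ (g v) = v from Equiv.symm_apply_apply g v] at hpre
    obtain ⟨w, hw⟩ := hpre
    refine ⟨w, ?_⟩
    have : g (v ++ w) = g v ++ u := by
      rw [hw, Equiv.Perm.apply_inv_self]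
    simp only [this, List.drop_left' (hg.1 v)]

lemma state_spec {g : Equiv.Perm (Vertex d)} (hg : IsTreeAut g) (v w : Vertex d) :
    g (v ++ w) = g v ++ state g v w := by
  rw [state, dif_pos (drop_bijective hg v)]
  obtain ⟨t, ht⟩ := hg.2 v w
  rw [Equiv.ofBijective_apply, ← ht, List.drop_left' (hg.1 v)]

lemma state_one (v : Vertex d) : state (1 : Equiv.Perm (Vertex d)) v = 1 := by
  apply Equiv.ext
  intro w
  have := state_spec (d := d) ((treeAut d).one_mem) v w
  simp only [Equiv.Perm.one_apply] at this ⊢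
  exact (List.append_cancel_left this.symm)

lemma state_mul {g h : Equiv.Perm (Vertex d)} (hg : IsTreeAut g) (hh : IsTreeAut h)
    (v : Vertex d) : state (g * h) v = state g (h v) * state h v := by
  apply Equiv.ext
  intro w
  have hgh : IsTreeAut (g * h) := (treeAut d).mul_mem (mem_treeAut hg) (mem_treeAut hh)
  have h1 := state_spec hgh v w
  have h2 : (g * h) (v ++ w) = g (h v) ++ state g (h v) (state h v w) := by
    rw [Equiv.Perm.mul_apply, state_spec hh v w, state_spec hg (h v) (state h v w)]
  have h3 : (g * h) v = g (h v) := Equiv.Perm.mul_apply g h v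
  have h4 := h1.symm.trans h2
  rw [h3] at h4
  have h5 := List.append_cancel_left h4
  rw [Equiv.Perm.mul_apply]
  exact h5

lemma state_pow {g : Equiv.Perm (Vertex d)} (hg : IsTreeAut g) {v : Vertex d}
    (hv : g v = v) (k : ℕ) : state (g ^ k) v = (state g v) ^ k := by
  induction k with
  | zero => simpa using state_one v
  | succ k ih =>
    have hgk : IsTreeAut (g ^ k) := (treeAut d).pow_mem (mem_treeAut hg) k
    rw [pow_succ, state_mul hgk hg, hv, ih, pow_succ]

lemma eq_one_of_firstLevel {g : Equiv.Perm (Vertex d)} (hg : IsTreeAut g)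
    (h : ∀ x : Fin d, g [x] = [x] ∧ state g [x] = 1) : g = 1 := by
  apply Equiv.ext
  intro u
  cases u with
  | nil =>
    have := hg.1 []
    simpa using List.length_eq_zero_iff.mp this
  | cons x t =>
    have h1 := state_spec hg [x] t
    simp only [List.singleton_append, (h x).1, (h x).2, Equiv.Perm.one_apply] at h1
    simpa using h1

lemma orbit_finite {a : Equiv.Perm (Vertex d)} (ha : IsTreeAut a) (v : Vertex d) :
    (MulAction.orbit (Subgroup.zpowers a) v).Finite := by
  apply (List.finite_length_eq (Fin d) v.length).subset
  rintro u ⟨⟨g, hg⟩, rfl⟩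
  obtain ⟨k, rfl⟩ := Subgroup.mem_zpowers_iff.mp hg
  have : IsTreeAut (a ^ k) := (treeAut d).zpow_mem (mem_treeAut ha) k
  exact this.1 v

lemma orbitCard_eq_period {a : Equiv.Perm (Vertex d)} (ha : IsTreeAut a) (v : Vertex d) :
    orbitCard a v = MulAction.period a v := by
  have hset : (Set.range fun n : ℤ => (a ^ n) v) = MulAction.orbit (Subgroup.zpowers a) v := by
    ext u
    constructor
    · rintro ⟨n, rfl⟩
      exact ⟨⟨a ^ n, Subgroup.zpow_mem _ (Subgroup.mem_zpowers a) n⟩, rfl⟩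
    · rintro ⟨⟨g, hg⟩, rfl⟩
      obtain ⟨k, rfl⟩ := Subgroup.mem_zpowers_iff.mp hg
      exact ⟨k, rfl⟩
  have hfin := orbit_finite ha v
  haveI := hfin.fintype
  rw [orbitCard, hset, Nat.card_eq_fintype_card, MulAction.period_eq_minimalPeriod,
    MulAction.minimalPeriod_eq_card]

end Aux

/-- Let `a ∈ Aut(T)`, and for each first-level letter `x` let
`m_x` be the size of the orbit of `x` under `a` and `a_x = (a^{m_x})|_x`.  Then
`a` has finite order if and only if every `a_x` has finite order, in which case
the order of `a` equals `lcm` of the numbers `m_x·|a_x|`. -/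
theorem order_via_firstLevel_states
    (d : ℕ) (hd : 2 ≤ d) (a : Equiv.Perm (Vertex d)) (ha : IsTreeAut a) :
    (IsOfFinOrder a ↔
      ∀ x : Fin d, IsOfFinOrder (state (a ^ orbitCard a ([x] : Vertex d)) ([x] : Vertex d))) ∧
    (IsOfFinOrder a →
      orderOf a = Finset.univ.lcm fun x : Fin d =>
        orbitCard a ([x] : Vertex d) *
          orderOf (state (a ^ orbitCard a ([x] : Vertex d)) ([x] : Vertex d))) := by
  set m : Fin d → ℕ := fun x => orbitCard a ([x] : Vertex d) with hm
  set b : Fin d → Equiv.Perm (Vertex d) :=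
    fun x => state (a ^ m x) ([x] : Vertex d) with hb
  have hper : ∀ x : Fin d, m x = MulAction.period a ([x] : Vertex d) :=
    fun x => orbitCard_eq_period ha _
  have hfin : ∀ x : Fin d,
      Finite (MulAction.orbit (Subgroup.zpowers a) ([x] : Vertex d)) :=
    fun x => (orbit_finite ha _).to_subtype
  have hmpos : ∀ x : Fin d, 0 < m x := by
    intro x
    haveI := hfin x
    rw [hper x, MulAction.period_eq_minimalPeriod]
    exact Nat.pos_of_ne_zero (NeZero.ne _)
  have hdvd : ∀ (x : Fin d) (n : ℕ), (a ^ n) ([x] : Vertex d) = [x] ↔ m x ∣ n := by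
    intro x n
    rw [hper x, ← MulAction.pow_smul_eq_iff_period_dvd, Equiv.Perm.smul_def]
  have hfix : ∀ x : Fin d, (a ^ m x) ([x] : Vertex d) = [x] := by
    intro x
    exact (hdvd x (m x)).mpr dvd_rfl
  have hbk : ∀ (x : Fin d) (k : ℕ), state (a ^ (m x * k)) ([x] : Vertex d) = (b x) ^ k := by
    intro x k
    rw [pow_mul]
    exact state_pow ((treeAut d).pow_mem (mem_treeAut ha) (m x)) (hfix x) k
  have key : ∀ n : ℕ, a ^ n = 1 ↔ ∀ x : Fin d, ∃ k : ℕ, n = m x * k ∧ (b x) ^ k = 1 := by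
    intro n
    constructor
    · intro h1 x
      have hx : (a ^ n) ([x] : Vertex d) = [x] := by rw [h1]; rfl
      obtain ⟨k, hk⟩ := (hdvd x n).mp hx
      refine ⟨k, hk, ?_⟩
      rw [← hbk x k, ← hk, h1, state_one]
    · intro h1
      apply eq_one_of_firstLevel ((treeAut d).pow_mem (mem_treeAut ha) n)
      intro x
      obtain ⟨k, hk, hk1⟩ := h1 x
      refine ⟨(hdvd x n).mpr ⟨k, hk⟩, ?_⟩
      rw [hk, hbk x k, hk1]
  have hforward : IsOfFinOrder a → ∀ x : Fin d, IsOfFinOrder (b x) := by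
    intro hfo x
    obtain ⟨n, hn, hn1⟩ := isOfFinOrder_iff_pow_eq_one.mp hfo
    obtain ⟨k, hk, hk1⟩ := (key n).mp hn1 x
    have hkpos : 0 < k := by
      rcases Nat.eq_zero_or_pos k with h | h
      · subst h; simp at hk; omega
      · exact h
    exact isOfFinOrder_iff_pow_eq_one.mpr ⟨k, hkpos, hk1⟩
  have hbackward : (∀ x : Fin d, IsOfFinOrder (b x)) → IsOfFinOrder a := by
    intro hbx
    set N : ℕ := Finset.univ.lcm (fun x : Fin d => m x * orderOf (b x)) with hN
    have hNpos : 0 < N := by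
      rcases Nat.eq_zero_or_pos N with h | h
      · exfalso
        rw [hN] at h
        rw [Finset.lcm_eq_zero_iff] at h
        obtain ⟨x, -, hx⟩ := h
        have h1 := hmpos x
        have h2 := (hbx x).orderOf_pos
        have : m x * orderOf (b x) = 0 := by simpa using hx.symm
        rcases Nat.mul_eq_zero.mp this with h | h <;> omega
      · exact h
    have hNone : a ^ N = 1 := by
      rw [key N]
      intro x
      have hdN : m x * orderOf (b x) ∣ N := Finset.dvd_lcm (Finset.mem_univ x)
      obtain ⟨c, hc⟩ := hdN
      refine ⟨orderOf (b x) * c, by rw [hc, mul_assoc], ?_⟩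
      rw [pow_mul, pow_orderOf_eq_one, one_pow]
    exact isOfFinOrder_iff_pow_eq_one.mpr ⟨N, hNpos, hNone⟩
  refine ⟨⟨hforward, hbackward⟩, ?_⟩
  intro hfo
  have hbx := hforward hfo
  set N : ℕ := Finset.univ.lcm (fun x : Fin d => m x * orderOf (b x)) with hN
  have hNone : a ^ N = 1 := by
    rw [key N]
    intro x
    obtain ⟨c, hc⟩ := Finset.dvd_lcm (f := fun x : Fin d => m x * orderOf (b x))
      (Finset.mem_univ x)
    refine ⟨orderOf (b x) * c, by rw [hN, hc, mul_assoc], ?_⟩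
    rw [pow_mul, pow_orderOf_eq_one, one_pow]
  apply Nat.dvd_antisymm
  · exact orderOf_dvd_of_pow_eq_one hNone
  · apply Finset.lcm_dvd
    intro x _
    obtain ⟨k, hk, hk1⟩ := (key (orderOf a)).mp (pow_orderOf_eq_one a) x
    obtain ⟨t, ht⟩ := orderOf_dvd_of_pow_eq_one hk1
    exact ⟨t, by rw [hk, ht, mul_assoc]⟩
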